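/- For every natural number n ≥ 1, writing n ≡ i (mod 5) with 0 ≤ i ≤ 4, the rational number (5! * ((n+5-i)/5)^i * ((n-i)/5)^(5-i)) / n^5 is strictly greater than 0.0384 * (1 - 50/n²), where the divisions (n+5-i)/5 and (n-i)/5 are exact. -/

import Mathlib

/-- For `n ≥ 1` with `i = n mod 5`, the density of `C₅` in the balanced blow-up
of `C₅` on `n` vertices, namely `5! ((n+5-i)/5)^i ((n-i)/5)^(5-i) / n^5`,
is strictly greater than `0.0384 (1 - 50/n²)`. -/
theorem balanced_density_lower_bound (n : ℕ) (hn : 1 ≤ n) :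
    (0.0384 : ℚ) * (1 - 50 / (n : ℚ) ^ 2) <
      ((Nat.factorial 5 : ℚ) * (((n : ℚ) + 5 - (n % 5 : ℕ)) / 5) ^ (n % 5)
          * (((n : ℚ) - (n % 5 : ℕ)) / 5) ^ (5 - n % 5)) / (n : ℚ) ^ 5 := by
  have hn0 : (0:ℚ) < n := by exact_mod_cast hn
  have hn1 : (1:ℚ) ≤ n := by exact_mod_cast hn
  have h5 : n % 5 < 5 := Nat.mod_lt _ (by norm_num)
  set i := n % 5 with hi
  clear_value i
  interval_cases i <;>
  · norm_num [Nat.factorial]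
    field_simp
    nlinarith [pow_pos hn0 2, pow_pos hn0 3, pow_pos hn0 5,
      mul_le_mul hn1 hn1 (by norm_num : (0:ℚ) ≤ 1) (le_of_lt hn0),
      sq_nonneg ((n:ℚ) - 1), sq_nonneg ((n:ℚ) + 1)]
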